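/- Let 𝒢 = (V,E) be a graph on the vertex set {1,…,n} and let {F^{ij} : (ij) ∈ E} be a family of fundamental matrices, extended by F^{ji} := (F^{ij})ᵀ. Then {F^{ij}} is compatible if and only if there exist H₁,…,Hₙ ∈ GL₃(ℝ) and nonzero scalars λ_{ij} = λ_{ji} such that the matrices G^{ij} := λ_{ij} Hᵢᵀ F^{ij} Hⱼ satisfy the cycle condition: for every closed walk i₀, i₁, …, i_k = i₀ in 𝒢 (each consecutive pair an edge), G^{i₀i₁} + G^{i₁i₂} + ⋯ + G^{i_{k−1}i_k} = 0. In particular, any family of rank-2 real 3×3 matrices {G^{ij} : (ij) ∈ E} with G^{ji} = (G^{ij})ᵀ satisfying this cycle condition is compatible, i.e., there exist cameras P₁,…,Pₙ and nonzero scalars μ_{ij} with μ_{ij} G^{ij} = ψ(Pᵢ,Pⱼ) for every edge. -/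

import Mathlib

open Matrix Module

/-- The 6×6 matrix whose first three rows form the block `[P₁ | x | 0]` and whose last
three rows form the block `[P₂ | 0 | y]`. -/
noncomputable def bigMat (P₁ P₂ : Matrix (Fin 3) (Fin 4) ℝ) (x y : Fin 3 → ℝ) :
    Matrix (Fin 6) (Fin 6) ℝ :=
  fun i j =>
    if hi : (i : ℕ) < 3 then
      if hj : (j : ℕ) < 4 then P₁ ⟨(i : ℕ), hi⟩ ⟨(j : ℕ), hj⟩
      else if (j : ℕ) = 4 then x ⟨(i : ℕ), hi⟩ else 0
    else
      if hj : (j : ℕ) < 4 then P₂ ⟨(i : ℕ) - 3, by have := i.isLt; omega⟩ ⟨(j : ℕ), hj⟩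
      else if (j : ℕ) = 4 then 0
      else y ⟨(i : ℕ) - 3, by have := i.isLt; omega⟩

/-- `psi P₁ P₂` is the unique 3×3 matrix `F` such that for all `x y : ℝ³`,
`xᵀ F y = det [P₁ | x | 0; P₂ | 0 | y]`.  (Since the determinant is bilinear in `(x, y)`,
this matrix is obtained by evaluating at pairs of standard basis vectors.) -/
noncomputable def psi (P₁ P₂ : Matrix (Fin 3) (Fin 4) ℝ) : Matrix (Fin 3) (Fin 3) ℝ :=
  fun a b => (bigMat P₁ P₂ (Pi.single a 1) (Pi.single b 1)).det

/-- A camera is a real 3×4 matrix of rank 3. -/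
def IsCamera (P : Matrix (Fin 3) (Fin 4) ℝ) : Prop := P.rank = 3

/-- The family `G` satisfies the cycle condition on the graph `E`: the sum of the
matrices along every closed walk vanishes. -/
def CycleCond (n : ℕ) (E : Fin n → Fin n → Prop)
    (G : Fin n → Fin n → Matrix (Fin 3) (Fin 3) ℝ) : Prop :=
  ∀ (k : ℕ) (v : ℕ → Fin n), v k = v 0 → (∀ m, m < k → E (v m) (v (m + 1))) →
    ∑ m ∈ Finset.range k, G (v m) (v (m + 1)) = 0

/-- The family `F` indexed by the edges of `E` is compatible. -/
def CompatibleOnGraph (n : ℕ) (E : Fin n → Fin n → Prop)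
    (F : Fin n → Fin n → Matrix (Fin 3) (Fin 3) ℝ) : Prop :=
  ∃ (P : Fin n → Matrix (Fin 3) (Fin 4) ℝ) (lam : Fin n → Fin n → ℝ),
    (∀ i, IsCamera (P i)) ∧
      ∀ i j, E i j → lam i j ≠ 0 ∧ lam i j • F i j = psi (P i) (P j)


def crossMat (v : Fin 3 → ℝ) : Matrix (Fin 3) (Fin 3) ℝ :=
  !![0, -v 2, v 1; v 2, 0, -v 0; -v 1, v 0, 0]

def onec (c : Fin 3 → ℝ) : Matrix (Fin 3) (Fin 4) ℝ :=
  fun i j => if (j : ℕ) < 3 then (if (i : ℕ) = (j : ℕ) then 1 else 0) else c i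

def e33 : Fin 3 ⊕ Fin 3 ≃ Fin 6 := finSumFinEquiv

lemma bigMat_onec_eq (a b x y : Fin 3 → ℝ) :
    bigMat (onec a) (onec b) x y =
      (fromBlocks (1 : Matrix (Fin 3) (Fin 3) ℝ)
        (fun i j => if j = 0 then a i else if j = 1 then x i else 0)
        (1 : Matrix (Fin 3) (Fin 3) ℝ)
        (fun i j => if j = 0 then b i else if j = 1 then 0 else y i)).submatrix
        e33.symm e33.symm := by
  ext i j
  fin_cases i <;> fin_cases j <;>
    simp [bigMat, onec, fromBlocks, e33, finSumFinEquiv, Matrix.one_apply, Fin.addCases] <;>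
    rfl

lemma det_bigMat_onec (a b x y : Fin 3 → ℝ) :
    (bigMat (onec a) (onec b) x y).det = x ⬝ᵥ (crossMat (b - a)) *ᵥ y := by
  rw [bigMat_onec_eq, Matrix.det_submatrix_equiv_self]
  refine (Matrix.det_fromBlocks_one₁₁
    (B := Matrix.of fun i j => if j = 0 then a i else if j = 1 then x i else 0)
    (C := (1 : Matrix (Fin 3) (Fin 3) ℝ))
    (D := Matrix.of fun i j => if j = 0 then b i else if j = 1 then 0 else y i)).trans ?_
  rw [Matrix.det_fin_three]
  simp [crossMat, dotProduct, mulVec, Fin.sum_univ_three, Matrix.one_mul, Matrix.sub_apply,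
    Pi.sub_apply, Matrix.mul_apply, Matrix.one_apply, Matrix.of_apply]
  ring

def e42 : Fin 4 ⊕ Fin 2 ≃ Fin 6 := finSumFinEquiv

def col2 (u v : Fin 3 → ℝ) : Matrix (Fin 3) (Fin 2) ℝ :=
  fun i j => if j = 0 then u i else v i

lemma bigMat_eq_blocks (P Q : Matrix (Fin 3) (Fin 4) ℝ) (x y : Fin 3 → ℝ) :
    bigMat P Q x y =
      (fromBlocks P (col2 x 0) Q (col2 0 y)).submatrix e33.symm e42.symm := by
  ext i j
  fin_cases i <;> fin_cases j <;>
    simp [bigMat, col2, fromBlocks, e33, e42, finSumFinEquiv, Fin.addCases] <;> rfl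

lemma mul_col2 (A : Matrix (Fin 3) (Fin 3) ℝ) (u v : Fin 3 → ℝ) :
    A * col2 u v = col2 (A *ᵥ u) (A *ᵥ v) := by
  ext i j
  fin_cases j <;> simp [col2, mul_apply, mulVec, dotProduct]

lemma bigMat_mul_right (P Q : Matrix (Fin 3) (Fin 4) ℝ) (U : Matrix (Fin 4) (Fin 4) ℝ)
    (x y : Fin 3 → ℝ) :
    bigMat (P * U) (Q * U) x y =
      bigMat P Q x y * (fromBlocks U 0 0 (1 : Matrix (Fin 2) (Fin 2) ℝ)).submatrix
        e42.symm e42.symm := by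
  rw [bigMat_eq_blocks, bigMat_eq_blocks, submatrix_mul_equiv, fromBlocks_multiply]
  simp

lemma blocks_mul_bigMat (A B : Matrix (Fin 3) (Fin 3) ℝ) (P Q : Matrix (Fin 3) (Fin 4) ℝ)
    (u v : Fin 3 → ℝ) :
    (fromBlocks A 0 0 B).submatrix e33.symm e33.symm * bigMat P Q u v =
      bigMat (A * P) (B * Q) (A *ᵥ u) (B *ᵥ v) := by
  rw [bigMat_eq_blocks, bigMat_eq_blocks, submatrix_mul_equiv, fromBlocks_multiply]
  simp [mul_col2]

lemma psi_mul_right (P Q : Matrix (Fin 3) (Fin 4) ℝ) (U : Matrix (Fin 4) (Fin 4) ℝ) :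
    psi (P * U) (Q * U) = U.det • psi P Q := by
  ext p q
  show (bigMat (P * U) (Q * U) _ _).det = U.det * (bigMat P Q _ _).det
  rw [bigMat_mul_right, Matrix.det_mul, Matrix.det_submatrix_equiv_self,
    Matrix.det_fromBlocks_zero₂₁]
  simp [mul_comm]

lemma psi_onec_onec (a b : Fin 3 → ℝ) : psi (onec a) (onec b) = crossMat (b - a) := by
  ext p q
  show (bigMat (onec a) (onec b) _ _).det = _
  rw [det_bigMat_onec]
  simp [dotProduct, Pi.single_apply, mulVec, Fin.sum_univ_three]

lemma entry_sandwich (M N X : Matrix (Fin 3) (Fin 3) ℝ) (p q : Fin 3) :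
    (Mᵀ * X * N) p q = (M *ᵥ Pi.single p 1) ⬝ᵥ (X *ᵥ (N *ᵥ Pi.single q 1)) := by
  simp [mul_apply, dotProduct, mulVec, Fin.sum_univ_three, Pi.single_apply]
  ring

lemma psi_mul_onec (A B : Matrix (Fin 3) (Fin 3) ℝ) (a b : Fin 3 → ℝ)
    (hA : IsUnit A.det) (hB : IsUnit B.det) :
    psi (A * onec a) (B * onec b) =
      (A.det * B.det) • ((A⁻¹)ᵀ * crossMat (b - a) * B⁻¹) := by
  ext p q
  have hsA : Pi.single p (1:ℝ) = A *ᵥ (A⁻¹ *ᵥ Pi.single p 1) := by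
    rw [mulVec_mulVec, mul_nonsing_inv A hA, one_mulVec]
  have hsB : Pi.single q (1:ℝ) = B *ᵥ (B⁻¹ *ᵥ Pi.single q 1) := by
    rw [mulVec_mulVec, mul_nonsing_inv B hB, one_mulVec]
  show (bigMat (A * onec a) (B * onec b) (Pi.single p 1) (Pi.single q 1)).det = _
  rw [hsA, hsB, ← blocks_mul_bigMat, Matrix.det_mul, Matrix.det_submatrix_equiv_self,
    Matrix.det_fromBlocks_zero₂₁, det_bigMat_onec]
  rw [Matrix.smul_apply, entry_sandwich]
  simp [mulVec_mulVec]

def vecOf (M : Matrix (Fin 3) (Fin 3) ℝ) : Fin 3 → ℝ := ![M 2 1, M 0 2, M 1 0]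

lemma crossMat_sub (u v : Fin 3 → ℝ) : crossMat (u - v) = crossMat u - crossMat v := by
  ext i j
  fin_cases i <;> fin_cases j <;> simp [crossMat] <;> ring

lemma crossMat_transpose (v : Fin 3 → ℝ) : (crossMat v)ᵀ = - crossMat v := by
  ext i j
  fin_cases i <;> fin_cases j <;> simp [crossMat]

lemma skew_eq_crossMat (M : Matrix (Fin 3) (Fin 3) ℝ) (h : Mᵀ = -M) :
    M = crossMat (vecOf M) := by
  have h' : ∀ a b, M b a = - M a b := fun a b => by
    have := congrFun (congrFun h a) b
    simpa [Matrix.transpose_apply] using this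
  ext i j
  fin_cases i <;> fin_cases j <;>
    simp [crossMat, vecOf] <;>
    linarith [h' 0 0, h' 1 1, h' 2 2, h' 0 1, h' 0 2, h' 1 2]

def embMat : Matrix (Fin 4) (Fin 3) ℝ := !![1,0,0; 0,1,0; 0,0,1; 0,0,0]

lemma onec_eq (c : Fin 3 → ℝ) : onec c = !![1,0,0,c 0; 0,1,0,c 1; 0,0,1,c 2] := by
  ext i j
  fin_cases i <;> fin_cases j <;> rfl

lemma rank_onec (c : Fin 3 → ℝ) : (onec c).rank = 3 := by
  have h1 : onec c * embMat = 1 := by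
    rw [onec_eq]
    ext i j
    fin_cases i <;> fin_cases j <;>
      simp [embMat, Matrix.mul_apply, Fin.sum_univ_four, Matrix.one_apply, Matrix.vecHead, Matrix.vecTail]
  refine le_antisymm ?_ ?_
  · simpa using (onec c).rank_le_card_height
  · have h2 := Matrix.rank_mul_le_left (onec c) embMat
    rw [h1] at h2
    simpa using h2

lemma rank_mul_left_eq (H : Matrix (Fin 3) (Fin 3) ℝ) (hH : H.det ≠ 0)
    (P : Matrix (Fin 3) (Fin 4) ℝ) : (H * P).rank = P.rank := by
  refine le_antisymm (Matrix.rank_mul_le_right H P) ?_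
  have : H⁻¹ * (H * P) = P := by
    rw [← Matrix.mul_assoc, Matrix.nonsing_inv_mul H (isUnit_iff_ne_zero.mpr hH),
      Matrix.one_mul]
  calc P.rank = (H⁻¹ * (H * P)).rank := by rw [this]
    _ ≤ (H * P).rank := Matrix.rank_mul_le_right _ _

section Potential
variable {n : ℕ} {E : Fin n → Fin n → Prop} {M : Type*} [AddCommGroup M]

lemma exists_potential (hEsym : ∀ i j, E i j → E j i) (g : Fin n → Fin n → M)
    (hcyc : ∀ (k : ℕ) (v : ℕ → Fin n), v k = v 0 → (∀ m, m < k → E (v m) (v (m + 1))) →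
      ∑ m ∈ Finset.range k, g (v m) (v (m + 1)) = 0) :
    ∃ c : Fin n → M, ∀ i j, E i j → g i j = c j - c i := by
  classical
  have hskew : ∀ i j, E i j → g j i = -g i j := by
    intro i j hij
    have h2 := hcyc 2 (fun m => if m = 1 then j else i) (by norm_num)
      (fun m hm => by interval_cases m <;> simp [hij, hEsym _ _ hij])
    rw [Finset.sum_range_succ, Finset.sum_range_one] at h2
    have h2' : g i j + g j i = 0 := by simpa using h2
    exact eq_neg_of_add_eq_zero_right h2'
  -- concatenation of walks
  have concat : ∀ (k₁ k₂ : ℕ) (v₁ v₂ : ℕ → Fin n), v₁ k₁ = v₂ 0 →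
      (∀ m, m < k₁ → E (v₁ m) (v₁ (m + 1))) → (∀ m, m < k₂ → E (v₂ m) (v₂ (m + 1))) →
      ∃ w : ℕ → Fin n, w 0 = v₁ 0 ∧ w (k₁ + k₂) = v₂ k₂ ∧
        (∀ m, m < k₁ + k₂ → E (w m) (w (m + 1))) ∧
        ∑ m ∈ Finset.range (k₁ + k₂), g (w m) (w (m + 1)) =
          ∑ m ∈ Finset.range k₁, g (v₁ m) (v₁ (m + 1)) +
            ∑ m ∈ Finset.range k₂, g (v₂ m) (v₂ (m + 1)) := by
    intro k₁ k₂ v₁ v₂ hglue he₁ he₂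
    refine ⟨fun m => if m < k₁ then v₁ m else v₂ (m - k₁), ?_, ?_, ?_, ?_⟩
    · by_cases h : 0 < k₁
      · simp [h]
      · have hk : k₁ = 0 := by omega
        simp [hk, ← hglue]
    · have : ¬ (k₁ + k₂ < k₁) := by omega
      simp [this]
    · intro m hm
      rcases lt_or_ge m k₁ with h | h
      · by_cases h' : m + 1 < k₁
        · simpa [h, h'] using he₁ m h
        · have hm1 : m + 1 = k₁ := by omega
          have : v₂ (m + 1 - k₁) = v₁ (m + 1) := by rw [hm1]; simp [← hglue]
          have hv : v₂ 0 = v₁ (m + 1) := by rw [← hglue, hm1]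
          simpa [h, h', this, hv] using he₁ m h
      · have h' : ¬ (m < k₁) := by omega
        have h'' : ¬ (m + 1 < k₁) := by omega
        have hsub : m + 1 - k₁ = (m - k₁) + 1 := by omega
        simpa [h', h'', hsub] using he₂ (m - k₁) (by omega)
    · rw [Finset.sum_range_add]
      congr 1
      · apply Finset.sum_congr rfl
        intro m hm
        rw [Finset.mem_range] at hm
        by_cases h' : m + 1 < k₁
        · simp [hm, h']
        · have hm1 : m + 1 = k₁ := by omega
          have : v₂ (m + 1 - k₁) = v₁ (m + 1) := by rw [hm1]; simp [← hglue]
          have hv : v₂ 0 = v₁ (m + 1) := by rw [← hglue, hm1]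
          simp [hm, h', this, hv]
      · apply Finset.sum_congr rfl
        intro m hm
        rw [Finset.mem_range] at hm
        have h1 : ¬ (k₁ + m < k₁) := by omega
        have h2 : ¬ (k₁ + m + 1 < k₁) := by omega
        have h3 : k₁ + m - k₁ = m := by omega
        have h4 : k₁ + m + 1 - k₁ = m + 1 := by omega
        simp [h1, h2, h3, h4]
  -- reversal of walks
  have rev : ∀ (k : ℕ) (v : ℕ → Fin n), (∀ m, m < k → E (v m) (v (m + 1))) →
      ∃ w : ℕ → Fin n, w 0 = v k ∧ w k = v 0 ∧ (∀ m, m < k → E (w m) (w (m + 1))) ∧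
        ∑ m ∈ Finset.range k, g (w m) (w (m + 1)) =
          - ∑ m ∈ Finset.range k, g (v m) (v (m + 1)) := by
    intro k v he
    refine ⟨fun m => v (k - m), by simp, by simp, ?_, ?_⟩
    · intro m hm
      show E (v (k - m)) (v (k - (m + 1)))
      have h2 : E (v (k - (m + 1))) (v (k - (m + 1) + 1)) := he _ (by omega)
      have h1 : k - (m + 1) + 1 = k - m := by omega
      rw [h1] at h2
      exact hEsym _ _ h2
    · have : ∀ m ∈ Finset.range k, g (v (k - m)) (v (k - (m + 1))) =
          - g (v (k - 1 - m)) (v (k - 1 - m + 1)) := by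
        intro m hm
        rw [Finset.mem_range] at hm
        have h1 : k - m = (k - 1 - m) + 1 := by omega
        have h2 : k - (m + 1) = k - 1 - m := by omega
        rw [h1, h2]
        exact hskew _ _ (he _ (by omega))
      rw [Finset.sum_congr rfl this, Finset.sum_neg_distrib]
      rw [Finset.sum_range_reflect (fun m => g (v m) (v (m + 1))) k]
  -- reachability
  set R : Fin n → Fin n → Prop := fun i j => ∃ (k : ℕ) (v : ℕ → Fin n), v 0 = i ∧ v k = j ∧
    ∀ m, m < k → E (v m) (v (m + 1)) with hR
  have hRrefl : ∀ i, R i i := fun i => ⟨0, fun _ => i, rfl, rfl, by omega⟩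
  have hRtrans : ∀ i j l, R i j → R j l → R i l := by
    rintro i j l ⟨k₁, v₁, h10, h1k, h1e⟩ ⟨k₂, v₂, h20, h2k, h2e⟩
    obtain ⟨w, hw0, hwk, hwe, -⟩ := concat k₁ k₂ v₁ v₂ (by rw [h1k, h20]) h1e h2e
    exact ⟨k₁ + k₂, w, by rw [hw0, h10], by rw [hwk, h2k], hwe⟩
  have hRsymm : ∀ i j, R i j → R j i := by
    rintro i j ⟨k, v, h0, hk, he⟩
    obtain ⟨w, hw0, hwk, hwe, -⟩ := rev k v he
    exact ⟨k, w, by rw [hw0, hk], by rw [hwk, h0], hwe⟩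
  have hRedge : ∀ i j, E i j → R i j := by
    intro i j hij
    exact ⟨1, fun m => if m = 0 then i else j, by simp, by simp, fun m hm => by
      interval_cases m <;> simpa using hij⟩
  -- uniqueness of walk sums
  have huniq : ∀ (i j : Fin n) (k₁ k₂ : ℕ) (v₁ v₂ : ℕ → Fin n),
      v₁ 0 = i → v₁ k₁ = j → (∀ m, m < k₁ → E (v₁ m) (v₁ (m + 1))) →
      v₂ 0 = i → v₂ k₂ = j → (∀ m, m < k₂ → E (v₂ m) (v₂ (m + 1))) →
      ∑ m ∈ Finset.range k₁, g (v₁ m) (v₁ (m + 1)) =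
        ∑ m ∈ Finset.range k₂, g (v₂ m) (v₂ (m + 1)) := by
    intro i j k₁ k₂ v₁ v₂ h10 h1k h1e h20 h2k h2e
    obtain ⟨w₂, hw20, hw2k, hw2e, hw2s⟩ := rev k₂ v₂ h2e
    obtain ⟨w, hw0, hwk, hwe, hws⟩ := concat k₁ k₂ v₁ w₂
      (by rw [h1k, hw20, h2k]) h1e hw2e
    have hcl := hcyc (k₁ + k₂) w (by rw [hwk, hw0, hw2k, h20, h10]) hwe
    rw [hws, hw2s, ← sub_eq_add_neg, sub_eq_zero] at hcl
    exact hcl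
  -- minimal representative of each component
  have hne : ∀ i : Fin n, (Finset.univ.filter (fun j => R i j)).Nonempty :=
    fun i => ⟨i, by simp [hRrefl i]⟩
  have min'_congr : ∀ (S T : Finset (Fin n)) (hS : S.Nonempty) (hT : T.Nonempty), S = T →
      S.min' hS = T.min' hT := by rintro S T hS hT rfl; rfl
  set rep : Fin n → Fin n := fun i => (Finset.univ.filter (fun j => R i j)).min' (hne i)
    with hrepdef
  have hrepR : ∀ i, R (rep i) i := by
    intro i
    have h := Finset.min'_mem (Finset.univ.filter (fun j => R i j)) (hne i)
    rw [Finset.mem_filter] at h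
    exact hRsymm _ _ h.2
  have hrepEdge : ∀ i j, E i j → rep i = rep j := by
    intro i j hij
    have hset : Finset.univ.filter (fun x => R i x) = Finset.univ.filter (fun x => R j x) := by
      ext x
      simp only [Finset.mem_filter, Finset.mem_univ, true_and]
      exact ⟨fun h => hRtrans _ _ _ (hRsymm _ _ (hRedge _ _ hij)) h,
             fun h => hRtrans _ _ _ (hRedge _ _ hij) h⟩
    exact min'_congr _ _ _ _ hset
  -- chosen walks from representatives
  have hwalk : ∀ i, ∃ kv : ℕ × (ℕ → Fin n), kv.2 0 = rep i ∧ kv.2 kv.1 = i ∧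
      ∀ m, m < kv.1 → E (kv.2 m) (kv.2 (m + 1)) := by
    intro i
    obtain ⟨k, v, h0, hk, he⟩ := hrepR i
    exact ⟨(k, v), h0, hk, he⟩
  choose wk hw0 hwk hwe using hwalk
  refine ⟨fun i => ∑ m ∈ Finset.range (wk i).1, g ((wk i).2 m) ((wk i).2 (m + 1)), ?_⟩
  intro i j hij
  -- single edge walk
  obtain ⟨w, hcw0, hcwk, hcwe, hcws⟩ := concat (wk i).1 1 (wk i).2
    (fun m => if m = 0 then i else j) (by simp [hwk i]) (hwe i)
    (fun m hm => by interval_cases m <;> simpa using hij)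
  have hsum1 : ∑ m ∈ Finset.range 1,
      g ((fun m => if m = 0 then i else j) m) ((fun m => if m = 0 then i else j) (m + 1)) =
      g i j := by simp
  rw [hsum1] at hcws
  have := huniq (rep j) j (wk j).1 ((wk i).1 + 1) (wk j).2 w (hw0 j) (hwk j) (hwe j)
    (by rw [hcw0, hw0 i, hrepEdge i j hij]) (by simpa using hcwk) hcwe
  rw [hcws] at this
  show g i j = (∑ m ∈ Finset.range (wk j).1, g ((wk j).2 m) ((wk j).2 (m + 1))) -
      (∑ m ∈ Finset.range (wk i).1, g ((wk i).2 m) ((wk i).2 (m + 1)))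
  rw [this]
  abel

end Potential
lemma main_compat {n : ℕ} {E : Fin n → Fin n → Prop} (hEsym : ∀ i j, E i j → E j i)
    (F : Fin n → Fin n → Matrix (Fin 3) (Fin 3) ℝ) (hFsym : ∀ i j, F j i = (F i j)ᵀ)
    (K : Fin n → Matrix (Fin 3) (Fin 3) ℝ) (hK : ∀ i, (K i).det ≠ 0)
    (ν : Fin n → Fin n → ℝ) (hνsym : ∀ i j, ν i j = ν j i) (hν : ∀ i j, E i j → ν i j ≠ 0)
    (hcyc : CycleCond n E (fun i j => ν i j • ((K i)ᵀ * F i j * K j))) :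
    CompatibleOnGraph n E F := by
  set G : Fin n → Fin n → Matrix (Fin 3) (Fin 3) ℝ :=
    fun i j => ν i j • ((K i)ᵀ * F i j * K j) with hG
  have hGsym : ∀ i j, G j i = (G i j)ᵀ := by
    intro i j
    rw [hG]
    simp only [Matrix.transpose_smul, Matrix.transpose_mul, Matrix.transpose_transpose]
    rw [hFsym i j, hνsym i j]
    simp [Matrix.mul_assoc]
  have hGskew : ∀ i j, E i j → (G i j)ᵀ = - G i j := by
    intro i j hij
    have h2 := hcyc 2 (fun m => if m = 1 then j else i) (by norm_num)
      (fun m hm => by interval_cases m <;> simp [hij, hEsym _ _ hij])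
    rw [Finset.sum_range_succ, Finset.sum_range_one] at h2
    have h2' : G i j + G j i = 0 := by simpa using h2
    rw [← hGsym i j]
    exact eq_neg_of_add_eq_zero_right h2'
  have hcycvec : ∀ (k : ℕ) (v : ℕ → Fin n), v k = v 0 →
      (∀ m, m < k → E (v m) (v (m + 1))) →
      ∑ m ∈ Finset.range k, vecOf (G (v m) (v (m + 1))) = 0 := by
    intro k v hv he
    have h := hcyc k v hv he
    ext a
    have : ∀ p q : Fin 3,
        ∑ m ∈ Finset.range k, (G (v m) (v (m + 1))) p q = 0 := by
      intro p q
      calc ∑ m ∈ Finset.range k, (G (v m) (v (m + 1))) p q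
          = (∑ m ∈ Finset.range k, G (v m) (v (m + 1))) p q := by
            rw [Matrix.sum_apply]
        _ = 0 := by rw [h]; rfl
    fin_cases a <;> simpa [vecOf, Finset.sum_apply] using (by first
      | exact this 2 1 | exact this 0 2 | exact this 1 0)
  obtain ⟨c, hc⟩ := exists_potential hEsym (fun i j => vecOf (G i j)) hcycvec
  have hGcross : ∀ i j, E i j → G i j = crossMat (c j - c i) := by
    intro i j hij
    have h1 := skew_eq_crossMat (G i j) (hGskew i j hij)
    rw [h1, hc i j hij]
  refine ⟨fun i => K i * onec (c i), fun i j => (K i).det * (K j).det * ν i j, ?_, ?_⟩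
  · intro i
    unfold IsCamera
    rw [rank_mul_left_eq _ (hK i), rank_onec]
  · intro i j hij
    refine ⟨by simp [hK i, hK j, hν i j hij], ?_⟩
    rw [psi_mul_onec _ _ _ _ (isUnit_iff_ne_zero.mpr (hK i)) (isUnit_iff_ne_zero.mpr (hK j))]
    rw [← hGcross i j hij, hG]
    have hKi : ((K i)⁻¹)ᵀ * (K i)ᵀ = 1 := by
      rw [← Matrix.transpose_mul, Matrix.mul_nonsing_inv _ (isUnit_iff_ne_zero.mpr (hK i)),
        Matrix.transpose_one]
    have hKj : K j * (K j)⁻¹ = 1 := Matrix.mul_nonsing_inv _ (isUnit_iff_ne_zero.mpr (hK j))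
    calc ((K i).det * (K j).det * ν i j) • F i j
        = ((K i).det * (K j).det) • (ν i j •
            (((K i)⁻¹)ᵀ * ((K i)ᵀ * (F i j * (K j * (K j)⁻¹))))) := by
          rw [hKj]
          simp [smul_smul]
          ring_nf
          rw [← Matrix.mul_assoc]
          rw [hKi, Matrix.one_mul]
      _ = ((K i).det * (K j).det) • (((K i)⁻¹)ᵀ * (ν i j • ((K i)ᵀ * F i j * K j)) * (K j)⁻¹) := by
          rw [Matrix.mul_smul, Matrix.smul_mul]
          congr 2
          simp [Matrix.mul_assoc]

lemma forward_dir {n : ℕ} {E : Fin n → Fin n → Prop} (hEsym : ∀ i j, E i j → E j i)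
    (F : Fin n → Fin n → Matrix (Fin 3) (Fin 3) ℝ) (hFsym : ∀ i j, F j i = (F i j)ᵀ)
    (hFrank : ∀ i j, E i j → (F i j).rank = 2) (hc : CompatibleOnGraph n E F) :
    ∃ (H : Fin n → Matrix (Fin 3) (Fin 3) ℝ) (lam : Fin n → Fin n → ℝ),
      (∀ i, (H i).det ≠ 0) ∧ (∀ i j, lam i j = lam j i) ∧
      (∀ i j, E i j → lam i j ≠ 0) ∧
      CycleCond n E (fun i j => lam i j • ((H i)ᵀ * F i j * H j)) := by
  classical
  rcases Nat.eq_zero_or_pos n with hn | hn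
  · subst hn
    exact ⟨fun _ => 1, fun _ _ => 1, fun i => absurd i.2 (by omega),
      fun i => absurd i.2 (by omega), fun i => absurd i.2 (by omega),
      fun k v _ _ => absurd (v 0).2 (by omega)⟩
  obtain ⟨P, μ, hcam, hedge⟩ := hc
  -- kernel vectors
  have hker : ∀ i, ∃ nv : Fin 4 → ℝ, nv ≠ 0 ∧
      LinearMap.ker (P i).mulVecLin = Submodule.span ℝ {nv} := by
    intro i
    have hrk : finrank ℝ (LinearMap.range (P i).mulVecLin) = 3 := hcam i
    have hsum := LinearMap.finrank_range_add_finrank_ker (P i).mulVecLin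
    rw [hrk, Module.finrank_fintype_fun_eq_card] at hsum
    have hker1 : finrank ℝ (LinearMap.ker (P i).mulVecLin) = 1 := by
      simp only [Fintype.card_fin] at hsum
      omega
    have hne : LinearMap.ker (P i).mulVecLin ≠ ⊥ := by
      intro h
      rw [h] at hker1
      simp at hker1
    obtain ⟨nv, hmem, hnz⟩ := (Submodule.ne_bot_iff _).mp hne
    refine ⟨nv, hnz, ?_⟩
    refine (Submodule.eq_of_le_of_finrank_le ?_ ?_).symm
    · rwa [Submodule.span_singleton_le_iff_mem]
    · rw [hker1, finrank_span_singleton hnz]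
  choose nv hnv0 hnvker using hker
  -- hyperplane avoidance
  have hr : ∃ r : Fin 4 → ℝ, ∀ i, r ⬝ᵥ nv i ≠ 0 := by
    by_contra h
    push_neg at h
    set f : Fin n → ((Fin 4 → ℝ) →ₗ[ℝ] ℝ) := fun i =>
      ⟨⟨fun x : Fin 4 → ℝ => x ⬝ᵥ nv i, fun a b => add_dotProduct a b (nv i)⟩,
        fun m a => smul_dotProduct m a (nv i)⟩ with hf
    set p : Fin n → Subspace ℝ (Fin 4 → ℝ) := fun i => LinearMap.ker (f i) with hp
    have hcover : ⋃ i, (p i : Set (Fin 4 → ℝ)) = Set.univ := by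
      ext x
      simp only [Set.mem_iUnion, Set.mem_univ, iff_true, SetLike.mem_coe]
      obtain ⟨i, hi⟩ := h x
      exact ⟨i, by simpa [hp, hf, LinearMap.mem_ker] using hi⟩
    obtain ⟨i, hi⟩ := Subspace.exists_eq_top_of_iUnion_eq_univ hcover
    have : nv i ⬝ᵥ nv i = 0 := by
      have : nv i ∈ p i := by rw [hi]; trivial
      simpa [hp, hf, LinearMap.mem_ker] using this
    exact hnv0 i (by
      funext k
      have := Finset.sum_eq_zero_iff_of_nonneg (fun m _ => mul_self_nonneg (nv i m)) |>.mp
        (by simpa [dotProduct] using this) k (Finset.mem_univ k)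
      exact mul_self_eq_zero.mp this)
  obtain ⟨r, hr⟩ := hr
  -- r ≠ 0, pick a nonzero coordinate
  have hr0 : r ≠ 0 := by
    intro h
    exact hr ⟨0, hn⟩ (by simp [h])
  obtain ⟨j0, hj0⟩ : ∃ j0, r j0 ≠ 0 := by
    by_contra h
    push_neg at h
    exact hr0 (funext h)
  -- invertible S with row 3 equal to r
  set S : Matrix (Fin 4) (Fin 4) ℝ :=
    (Matrix.updateRow (1 : Matrix (Fin 4) (Fin 4) ℝ) j0 r).submatrix
      (Equiv.swap (3 : Fin 4) j0) id with hS
  have hSrow3 : ∀ k, S 3 k = r k := by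
    intro k
    simp [hS, Matrix.submatrix_apply, Equiv.swap_apply_left]
  have hSdet : S.det ≠ 0 := by
    have h1 : (Matrix.updateRow (1 : Matrix (Fin 4) (Fin 4) ℝ) j0 r).det = r j0 := by
      conv_lhs => rw [show (1 : Matrix (Fin 4) (Fin 4) ℝ) = (1 : Matrix (Fin 4) (Fin 4) ℝ)ᵀ
        from (Matrix.transpose_one).symm]
      rw [Matrix.updateRow_transpose, Matrix.det_transpose, ← Matrix.cramer_apply,
        Matrix.cramer_one]
      simp
    have h2 : S.det = Equiv.Perm.sign (Equiv.swap (3 : Fin 4) j0) *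
        (Matrix.updateRow (1 : Matrix (Fin 4) (Fin 4) ℝ) j0 r).det := by
      rw [hS]
      exact Matrix.det_permute _ _
    rw [h2, h1]
    rcases Int.units_eq_one_or (Equiv.Perm.sign (Equiv.swap (3 : Fin 4) j0)) with h | h <;>
      simp [h, hj0]
  -- the homography T and transformed cameras
  have hSunit : IsUnit S.det := isUnit_iff_ne_zero.mpr hSdet
  set T : Matrix (Fin 4) (Fin 4) ℝ := S⁻¹ with hT
  have hTS : T * S = 1 := Matrix.nonsing_inv_mul S hSunit
  have hST : S * T = 1 := Matrix.mul_nonsing_inv S hSunit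
  set Q : Fin n → Matrix (Fin 3) (Fin 4) ℝ := fun i => P i * T with hQ
  have hPQ : ∀ i, P i = Q i * S := by
    intro i
    rw [hQ]
    simp only
    rw [Matrix.mul_assoc, hTS, Matrix.mul_one]
  set A : Fin n → Matrix (Fin 3) (Fin 3) ℝ := fun i => (Q i).submatrix id Fin.castSucc with hA
  have e0 : Fin.castSucc (0 : Fin 3) = (0 : Fin 4) := rfl
  have e1 : Fin.castSucc (1 : Fin 3) = (1 : Fin 4) := rfl
  have e2 : Fin.castSucc (2 : Fin 3) = (2 : Fin 4) := rfl
  have hpad : ∀ (i : Fin n) (x : Fin 3 → ℝ), Q i *ᵥ ![x 0, x 1, x 2, 0] = A i *ᵥ x := by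
    intro i x
    funext a
    simp [hA, Matrix.mulVec, dotProduct, Fin.sum_univ_four, Fin.sum_univ_three,
      Matrix.submatrix_apply, e0, e1, e2]
  have hAdet : ∀ i, (A i).det ≠ 0 := by
    intro i h0
    obtain ⟨x, hx0, hAx⟩ := Matrix.exists_mulVec_eq_zero_iff.mpr h0
    have h1 : (P i).mulVecLin (T *ᵥ ![x 0, x 1, x 2, 0]) = 0 := by
      rw [Matrix.mulVecLin_apply, Matrix.mulVec_mulVec]
      rw [show P i * T = Q i from rfl, hpad i x, hAx]
    have h2 : T *ᵥ ![x 0, x 1, x 2, 0] ∈ LinearMap.ker (P i).mulVecLin :=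
      LinearMap.mem_ker.mpr h1
    rw [hnvker i] at h2
    obtain ⟨α, hα⟩ := Submodule.mem_span_singleton.mp h2
    have h3 : (![x 0, x 1, x 2, 0] : Fin 4 → ℝ) = α • (S *ᵥ nv i) := by
      have : S *ᵥ (T *ᵥ ![x 0, x 1, x 2, 0]) = ![x 0, x 1, x 2, 0] := by
        rw [Matrix.mulVec_mulVec, hST, Matrix.one_mulVec]
      rw [← this, ← hα]
      rw [Matrix.mulVec_smul]
    have h4 : (0:ℝ) = α * (r ⬝ᵥ nv i) := by
      have := congrFun h3 3
      simpa [Matrix.mulVec, dotProduct, hSrow3] using this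
    have hα0 : α = 0 := by
      rcases mul_eq_zero.mp h4.symm with h | h
      · exact h
      · exact absurd h (hr i)
    rw [hα0, zero_smul] at h3
    apply hx0
    funext b
    fin_cases b
    · simpa using congrFun h3 0
    · simpa using congrFun h3 1
    · simpa using congrFun h3 2
  set c : Fin n → Fin 3 → ℝ := fun i => (A i)⁻¹ *ᵥ (fun a => Q i a 3) with hcdef
  have hQdecomp : ∀ i, Q i = A i * onec (c i) := by
    intro i
    have hcol : A i *ᵥ c i = fun a => Q i a 3 := by
      rw [hcdef]
      simp only
      rw [Matrix.mulVec_mulVec, Matrix.mul_nonsing_inv _ (isUnit_iff_ne_zero.mpr (hAdet i)),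
        Matrix.one_mulVec]
    ext a b
    fin_cases b
    · simp [onec, Matrix.mul_apply, Fin.sum_univ_three, hA, e0, e1, e2]
    · simp [onec, Matrix.mul_apply, Fin.sum_univ_three, hA, e0, e1, e2]
    · simp [onec, Matrix.mul_apply, Fin.sum_univ_three, hA, e0, e1, e2]
    · have := congrFun hcol a
      simpa [onec, Matrix.mul_apply, Fin.sum_univ_three, Matrix.mulVec, dotProduct]
        using this.symm
  have hpsiPQ : ∀ i j, psi (P i) (P j) =
      S.det • (((A i).det * (A j).det) •
        (((A i)⁻¹)ᵀ * crossMat (c j - c i) * ((A j)⁻¹))) := by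
    intro i j
    rw [hPQ i, hPQ j, psi_mul_right, hQdecomp i, hQdecomp j,
      psi_mul_onec _ _ _ _ (isUnit_iff_ne_zero.mpr (hAdet i)) (isUnit_iff_ne_zero.mpr (hAdet j))]
  have key : ∀ i j, E i j → μ i j • ((A i)ᵀ * F i j * A j) =
      (S.det * ((A i).det * (A j).det)) • crossMat (c j - c i) := by
    intro i j hij
    have h := (hedge i j hij).2
    rw [hpsiPQ i j] at h
    have hAiT : (A i)ᵀ * ((A i)⁻¹)ᵀ = 1 := by
      rw [← Matrix.transpose_mul, Matrix.nonsing_inv_mul _ (isUnit_iff_ne_zero.mpr (hAdet i)),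
        Matrix.transpose_one]
    have hAj : (A j)⁻¹ * A j = 1 := Matrix.nonsing_inv_mul _ (isUnit_iff_ne_zero.mpr (hAdet j))
    calc μ i j • ((A i)ᵀ * F i j * A j)
        = (A i)ᵀ * (μ i j • F i j) * A j := by
          simp [Matrix.smul_mul, Matrix.mul_smul]
      _ = (A i)ᵀ * (S.det • (((A i).det * (A j).det) •
            (((A i)⁻¹)ᵀ * crossMat (c j - c i) * ((A j)⁻¹)))) * A j := by rw [h]
      _ = (S.det * ((A i).det * (A j).det)) •
            ((A i)ᵀ * (((A i)⁻¹)ᵀ * crossMat (c j - c i) * ((A j)⁻¹)) * A j) := by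
          simp [smul_smul, Matrix.mul_smul, Matrix.smul_mul]
      _ = (S.det * ((A i).det * (A j).det)) • crossMat (c j - c i) := by
          congr 1
          simp only [Matrix.mul_assoc]
          rw [hAj, Matrix.mul_one, ← Matrix.mul_assoc, hAiT, Matrix.one_mul]
  have hFne : ∀ i j, E i j → F i j ≠ 0 := by
    intro i j hij h0
    have := hFrank i j hij
    rw [h0] at this
    simp at this
  have hMne : ∀ i j, E i j → (A i)ᵀ * F i j * A j ≠ 0 := by
    intro i j hij h0
    apply hFne i j hij
    have h1 : (((A i)ᵀ)⁻¹ * ((A i)ᵀ * F i j * A j)) * (A j)⁻¹ = F i j := by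
      rw [← Matrix.mul_assoc, ← Matrix.mul_assoc,
        Matrix.nonsing_inv_mul _ (isUnit_iff_ne_zero.mpr (by
          rw [Matrix.det_transpose]; exact hAdet i)), Matrix.one_mul,
        Matrix.mul_assoc, Matrix.mul_nonsing_inv _ (isUnit_iff_ne_zero.mpr (hAdet j)),
        Matrix.mul_one]
    rw [← h1, h0]
    simp
  have hμsym : ∀ i j, E i j → μ i j = μ j i := by
    intro i j hij
    have hji : E j i := hEsym i j hij
    have k1 := key i j hij
    have k2 := key j i hji
    have k2t := congrArg Matrix.transpose k2
    rw [Matrix.transpose_smul, Matrix.transpose_smul, Matrix.transpose_mul,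
      Matrix.transpose_mul, Matrix.transpose_transpose, crossMat_transpose] at k2t
    have hFji : (F j i)ᵀ = F i j := by rw [hFsym i j, Matrix.transpose_transpose]
    have hcneg : -crossMat (c i - c j) = crossMat (c j - c i) := by
      rw [crossMat_sub, crossMat_sub]
      abel
    rw [hFji, hcneg] at k2t
    have k2' : μ j i • ((A i)ᵀ * F i j * A j) =
        (S.det * ((A i).det * (A j).det)) • crossMat (c j - c i) := by
      calc μ j i • ((A i)ᵀ * F i j * A j)
          = μ j i • ((A i)ᵀ * (F i j * A j)) := by rw [Matrix.mul_assoc]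
        _ = (S.det * ((A j).det * (A i).det)) • crossMat (c j - c i) := k2t
        _ = (S.det * ((A i).det * (A j).det)) • crossMat (c j - c i) := by
            rw [mul_comm ((A j).det) ((A i).det)]
    have hsub : (μ i j - μ j i) • ((A i)ᵀ * F i j * A j) = 0 := by
      rw [sub_smul, k1, k2']
      abel
    rcases smul_eq_zero.mp hsub with h | h
    · linarith [sub_eq_zero.mp (by linarith [h] : μ i j - μ j i = 0)]
    · exact absurd h (hMne i j hij)
  refine ⟨A, fun i j =>
    if h : E i j then μ i j / (S.det * ((A i).det * (A j).det)) else 1, hAdet, ?_, ?_, ?_⟩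
  · intro i j
    show (if h : E i j then μ i j / (S.det * ((A i).det * (A j).det)) else 1) =
      (if h : E j i then μ j i / (S.det * ((A j).det * (A i).det)) else 1)
    by_cases h : E i j
    · rw [dif_pos h, dif_pos (hEsym i j h), hμsym i j h, mul_comm ((A i).det) ((A j).det)]
    · rw [dif_neg h, dif_neg (fun h' => h (hEsym j i h'))]
  · intro i j hij
    show (if h : E i j then μ i j / (S.det * ((A i).det * (A j).det)) else 1) ≠ 0
    rw [dif_pos hij]
    exact div_ne_zero (hedge i j hij).1 (mul_ne_zero hSdet (mul_ne_zero (hAdet i) (hAdet j)))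
  · intro k v hv he
    have hterm : ∀ m, m < k →
        (if h : E (v m) (v (m + 1)) then
          μ (v m) (v (m + 1)) / (S.det * ((A (v m)).det * (A (v (m + 1))).det)) else 1) •
          ((A (v m))ᵀ * F (v m) (v (m + 1)) * A (v (m + 1))) =
        crossMat (c (v (m + 1))) - crossMat (c (v m)) := by
      intro m hm
      have hij := he m hm
      rw [dif_pos hij]
      have hκ0 : S.det * ((A (v m)).det * (A (v (m + 1))).det) ≠ 0 :=
        mul_ne_zero hSdet (mul_ne_zero (hAdet _) (hAdet _))
      rw [div_eq_mul_inv, mul_comm, mul_smul, key _ _ hij, smul_smul,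
        inv_mul_cancel₀ hκ0, one_smul, crossMat_sub]
    calc ∑ m ∈ Finset.range k, (fun i j =>
          (if h : E i j then μ i j / (S.det * ((A i).det * (A j).det)) else 1) •
          ((A i)ᵀ * F i j * A j)) (v m) (v (m + 1))
        = ∑ m ∈ Finset.range k, (crossMat (c (v (m + 1))) - crossMat (c (v m))) := by
          refine Finset.sum_congr rfl (fun m hm => ?_)
          exact hterm m (Finset.mem_range.mp hm)
      _ = crossMat (c (v k)) - crossMat (c (v 0)) :=
          Finset.sum_range_sub (fun m => crossMat (c (v m))) k
      _ = 0 := by rw [hv]; simp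


/-- the cycle theorem. -/
theorem stmt19 (n : ℕ) (E : Fin n → Fin n → Prop)
    (hEsym : ∀ i j, E i j → E j i) (hEirr : ∀ i, ¬ E i i)
    (F : Fin n → Fin n → Matrix (Fin 3) (Fin 3) ℝ)
    (hFsym : ∀ i j, F j i = (F i j)ᵀ)
    (hFrank : ∀ i j, E i j → (F i j).rank = 2) :
    (CompatibleOnGraph n E F ↔
        ∃ (H : Fin n → Matrix (Fin 3) (Fin 3) ℝ) (lam : Fin n → Fin n → ℝ),
          (∀ i, (H i).det ≠ 0) ∧ (∀ i j, lam i j = lam j i) ∧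
          (∀ i j, E i j → lam i j ≠ 0) ∧
          CycleCond n E (fun i j => lam i j • ((H i)ᵀ * F i j * H j))) ∧
      (∀ G : Fin n → Fin n → Matrix (Fin 3) (Fin 3) ℝ,
        (∀ i j, G j i = (G i j)ᵀ) → (∀ i j, E i j → (G i j).rank = 2) →
        CycleCond n E G → CompatibleOnGraph n E G) := by
  constructor
  · constructor
    · intro hc
      exact forward_dir hEsym F hFsym hFrank hc
    · rintro ⟨H, lam, hH, hlamsym, hlamne, hcyc⟩
      exact main_compat hEsym F hFsym H hH lam hlamsym hlamne hcyc
  · intro G hGsym hGrank hGcyc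
    have h1 : (fun i j => (1:ℝ) • ((1 : Matrix (Fin 3) (Fin 3) ℝ)ᵀ * G i j * 1)) = G := by
      funext i j
      simp
    exact main_compat hEsym G hGsym (fun _ => 1) (fun _ => by simp) (fun _ _ => 1)
      (fun _ _ => rfl) (fun _ _ _ => one_ne_zero) (by rw [h1]; exact hGcyc)
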